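/- Let W be an elementary (n × n)-wall with n ≥ 7. Then mimw(W) ≥ √n / 50. -/

import Mathlib

open SimpleGraph

/-- `M` is an induced matching in the bipartite graph `G[X,Y]`: every pair in `M` is an
edge of `G` with first endpoint in `X` and second endpoint in `Y`, the pairs are pairwise
vertex-disjoint, and no edge of `G` between `X` and `Y` joins vertices incident to
distinct pairs of `M`. -/
def IsInducedCutMatching {V : Type*} (G : SimpleGraph V) (X Y : Set V)
    (M : Finset (V × V)) : Prop :=
  (∀ p ∈ M, p.1 ∈ X ∧ p.2 ∈ Y ∧ G.Adj p.1 p.2) ∧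
  ∀ p ∈ M, ∀ q ∈ M, p ≠ q →
    p.1 ≠ q.1 ∧ p.2 ≠ q.2 ∧ p.1 ≠ q.2 ∧ p.2 ≠ q.1 ∧
    ¬ G.Adj p.1 q.2 ∧ ¬ G.Adj q.1 p.2

/-- `cutmim G X Y` is the maximum size of an induced matching in `G[X,Y]`. -/
noncomputable def cutmim {V : Type*} (G : SimpleGraph V) (X Y : Set V) : ℕ :=
  sSup {n : ℕ | ∃ M : Finset (V × V), IsInducedCutMatching G X Y M ∧ M.card = n}

/-- A branch decomposition of a graph `G`: a finite tree `T` of maximum degree at most 3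
together with a bijection `δ` from the vertices of `G` to the leaves of `T`. -/
structure BranchDecomp {V : Type*} (G : SimpleGraph V) where
  L : Type
  T : SimpleGraph L
  finite : Finite L
  connected : T.Connected
  acyclic : T.IsAcyclic
  subcubic : ∀ x : L, (T.neighborSet x).ncard ≤ 3
  δ : V → L
  δ_inj : Function.Injective δ
  δ_leaf : ∀ v : V, (T.neighborSet (δ v)).ncard = 1
  δ_surj : ∀ x : L, (T.neighborSet x).ncard = 1 → ∃ v : V, δ v = x

/-- The side of the cut of `V(G)` induced by the tree edge `ab`: the set of vertices of
`G` mapped by `δ` into the component of `T - ab` containing `a`. -/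
def BranchDecomp.side {V : Type*} {G : SimpleGraph V} (B : BranchDecomp G)
    (a b : B.L) : Set V :=
  {v : V | (B.T.deleteEdges {s(a, b)}).Reachable (B.δ v) a}

/-- The mim-width of a branch decomposition: the maximum over tree edges `ab` of
`cutmim G (A_e, V(G) \ A_e)`. -/
noncomputable def BranchDecomp.width {V : Type*} {G : SimpleGraph V}
    (B : BranchDecomp G) : ℕ :=
  sSup {n : ℕ | ∃ a b : B.L, B.T.Adj a b ∧ n = cutmim G (B.side a b) (B.side a b)ᶜ}

/-- The mim-width of a graph: the minimum width over all branch decompositions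
(by convention `0` if no branch decomposition exists, e.g. for graphs with fewer
than two vertices). -/
noncomputable def mimw {V : Type*} (G : SimpleGraph V) : ℕ :=
  sInf {n : ℕ | ∃ B : BranchDecomp G, B.width = n}

/-- `G` is `H`-free: no induced subgraph of `G` is isomorphic to `H`. -/
def HFree {V W : Type*} (G : SimpleGraph V) (H : SimpleGraph W) : Prop :=
  ¬ ∃ S : Set V, Nonempty ((G.induce S) ≃g H)

/-- The disjoint union of two graphs. -/
def sumGraph {α β : Type*} (G : SimpleGraph α) (H : SimpleGraph β) :
    SimpleGraph (α ⊕ β) :=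
  SimpleGraph.fromRel (fun a b =>
    (∃ x y, a = Sum.inl x ∧ b = Sum.inl y ∧ G.Adj x y) ∨
    (∃ x y, a = Sum.inr x ∧ b = Sum.inr y ∧ H.Adj x y))

/-- `tP₂`: the disjoint union of `t` single edges. -/
def tP2graph (t : ℕ) : SimpleGraph (Fin t × Fin 2) :=
  SimpleGraph.fromRel (fun a b => a.1 = b.1)

/-- `sP₁ + P₂`: `s` isolated vertices together with a single edge. -/
def sP1P2graph (s : ℕ) : SimpleGraph (Fin s ⊕ Fin 2) :=
  SimpleGraph.fromRel (fun a b => ∃ i j : Fin 2, a = Sum.inr i ∧ b = Sum.inr j)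

/-- `K_r ⊟ K_r`: two disjoint copies of `K_r` joined by a perfect matching. -/
def KboxK (r : ℕ) : SimpleGraph (Fin r ⊕ Fin r) :=
  SimpleGraph.fromRel (fun a b =>
    (∃ i j, a = Sum.inl i ∧ b = Sum.inl j) ∨
    (∃ i j, a = Sum.inr i ∧ b = Sum.inr j) ∨
    (∃ i, a = Sum.inl i ∧ b = Sum.inr i))

/-- `K_r ⊟ rP₁`: a clique `a_1, …, a_r`, an independent set `b_1, …, b_r`, and the
matching edges `a_i b_i`. -/
def KboxI (r : ℕ) : SimpleGraph (Fin r ⊕ Fin r) :=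
  SimpleGraph.fromRel (fun a b =>
    (∃ i j, a = Sum.inl i ∧ b = Sum.inl j) ∨
    (∃ i, a = Sum.inl i ∧ b = Sum.inr i))

/-- `K_r ⊟ P₁`: `K_r` plus a pendant vertex attached to exactly one vertex of `K_r`. -/
def KboxP1 (r : ℕ) : SimpleGraph (Fin r ⊕ Unit) :=
  SimpleGraph.fromRel (fun a b =>
    (∃ i j : Fin r, a = Sum.inl i ∧ b = Sum.inl j) ∨
    (∃ i : Fin r, i.val = 0 ∧ a = Sum.inl i ∧ b = Sum.inr ()))

/-- The claw `K_{1,3}`: vertex `0` adjacent to the three leaves `1`, `2`, `3`. -/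
def clawGraph : SimpleGraph (Fin 4) :=
  SimpleGraph.fromRel (fun a _ => a = 0)

/-- The diamond: `K_4` minus the edge `{2,3}`. -/
def diamondGraph : SimpleGraph (Fin 4) :=
  SimpleGraph.fromRel (fun a b => ¬(a = 2 ∧ b = 3) ∧ ¬(a = 3 ∧ b = 2))

/-- The bowtie `⋈`: two triangles `{0,1,2}` and `{0,3,4}` sharing the vertex `0`. -/
def bowtieGraph : SimpleGraph (Fin 5) :=
  SimpleGraph.fromRel (fun a b => a = 0 ∨ (a = 1 ∧ b = 2) ∨ (a = 3 ∧ b = 4))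

/-- `P₁ + 2P₂`: the isolated vertex `0` and the two disjoint edges `12` and `34`. -/
def P1plus2P2graph : SimpleGraph (Fin 5) :=
  SimpleGraph.fromRel (fun a b => (a = 1 ∧ b = 2) ∨ (a = 3 ∧ b = 4))

/-- The subdivided claw `S_{1,1,5}`: centre `0` with leaves `1`, `2` at distance one and
the path `0-3-4-5-6-7`. -/
def S115graph : SimpleGraph (Fin 8) :=
  SimpleGraph.fromRel (fun a b =>
    (a = 0 ∧ b = 1) ∨ (a = 0 ∧ b = 2) ∨ (a = 0 ∧ b = 3) ∨
    (a = 3 ∧ b = 4) ∨ (a = 4 ∧ b = 5) ∨ (a = 5 ∧ b = 6) ∨ (a = 6 ∧ b = 7))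

/-- The Ramsey number `R(a,b)`: the least `N` such that every graph on at least `N`
vertices contains a clique of size `a` or an independent set of size `b`. -/
noncomputable def ramsey (a b : ℕ) : ℕ :=
  sInf {N : ℕ | ∀ M : ℕ, N ≤ M → ∀ G : SimpleGraph (Fin M),
    (∃ s : Finset (Fin M), G.IsNClique a s) ∨ (∃ s : Finset (Fin M), Gᶜ.IsNClique b s)}

/-- The `h × 2r` grid with the vertical edges prescribed by the wall construction:
the vertical edge between rows `i` and `i+1` of column `j` (all `0`-indexed) is kept
exactly when `i ≡ j (mod 2)`. -/
def wallPre (h r : ℕ) : SimpleGraph (Fin h × Fin (2 * r)) :=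
  SimpleGraph.fromRel (fun a b =>
    (a.1 = b.1 ∧ (a.2 : ℕ) + 1 = (b.2 : ℕ)) ∨
    (a.2 = b.2 ∧ (a.1 : ℕ) + 1 = (b.1 : ℕ) ∧ (a.1 : ℕ) % 2 = (a.2 : ℕ) % 2))

/-- The elementary `(h × r)`-wall: delete from `wallPre h r` all vertices of degree 1. -/
def elementaryWall (h r : ℕ) :
    SimpleGraph {v : Fin h × Fin (2 * r) // ((wallPre h r).neighborSet v).ncard ≠ 1} :=
  (wallPre h r).induce {v | ((wallPre h r).neighborSet v).ncard ≠ 1}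

/-- The graph obtained from `W` by simultaneously performing a clique implant on every
vertex of degree `3`: a degree-3 vertex `v` is replaced by the triangle of vertices
`(v, some u)` for `u` a neighbour of `v`, and `(v, some u)` inherits the edge of `v`
towards `u`; vertices of degree `≠ 3` are kept as `(v, none)`. -/
def cliqueImplantAll {V : Type*} (W : SimpleGraph V) :
    SimpleGraph {p : V × Option V //
      (p.2 = none ∧ (W.neighborSet p.1).ncard ≠ 3) ∨
      (∃ u, p.2 = some u ∧ (W.neighborSet p.1).ncard = 3 ∧ W.Adj p.1 u)} :=
  SimpleGraph.fromRel (fun a b =>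
    (a.1.1 = b.1.1 ∧ a.1.2 ≠ b.1.2) ∨
    (W.Adj a.1.1 b.1.1 ∧ (a.1.2 = none ∨ a.1.2 = some b.1.1) ∧
      (b.1.2 = none ∨ b.1.2 = some a.1.1)))

/-- A net-wall: the graph obtained from the elementary `(n × n)`-wall by performing a
clique implant on every vertex of degree `3`. -/
def netWall (n : ℕ) := cliqueImplantAll (elementaryWall n n)

/-- The chordal bipartite graph `G'` of Brault-Baron, Capelli and Mengel, built from a
graph `G`: vertices `x_v` (`Sum.inl v`), `y_v` (`Sum.inr (Sum.inl v)`), and for every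
ordered adjacent pair `p = (u,v)` two vertices `q_p = (p,0)` and `t_p = (p,1)`;
`X` is complete to `Y`, and for each adjacent pair `(u,v)` there is a path
`x_u - q_{(u,v)} - t_{(u,v)} - y_v`. -/
def BCMgraph {V : Type*} (G : SimpleGraph V) :
    SimpleGraph (V ⊕ V ⊕ ({p : V × V // G.Adj p.1 p.2} × Fin 2)) :=
  SimpleGraph.fromRel (fun a b =>
    (∃ u w : V, a = Sum.inl u ∧ b = Sum.inr (Sum.inl w)) ∨
    (∃ p : {p : V × V // G.Adj p.1 p.2},
      a = Sum.inl p.1.1 ∧ b = Sum.inr (Sum.inr (p, 0))) ∨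
    (∃ p : {p : V × V // G.Adj p.1 p.2},
      a = Sum.inr (Sum.inr (p, 0)) ∧ b = Sum.inr (Sum.inr (p, 1))) ∨
    (∃ p : {p : V × V // G.Adj p.1 p.2},
      a = Sum.inr (Sum.inr (p, 1)) ∧ b = Sum.inr (Sum.inl p.1.2)))


section Generic
variable {V : Type*} {G : SimpleGraph V}

lemma nat_ivt (P : ℕ → Prop) : ∀ {a b : ℕ}, a ≤ b → P a → ¬ P b →
    ∃ k, a ≤ k ∧ k < b ∧ P k ∧ ¬ P (k + 1) := by
  intro a b
  induction b with
  | zero => intro h ha hb; rw [Nat.le_zero.mp h] at ha; exact absurd ha hb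
  | succ b ih =>
    intro h ha hb
    rcases Nat.lt_or_ge a (b+1) with h' | h'
    · by_cases hPb : P b
      · exact ⟨b, by omega, by omega, hPb, hb⟩
      · obtain ⟨k, h1, h2, h3, h4⟩ := ih (by omega) ha hPb
        exact ⟨k, h1, by omega, h3, h4⟩
    · have : a = b + 1 := le_antisymm h h'
      rw [this] at ha; exact absurd ha hb

lemma exists_crossing {X : Set V} {f : ℕ → V} {a b : ℕ} (hab : a ≤ b)
    (hadj : ∀ k, a ≤ k → k < b → G.Adj (f k) (f (k+1)))
    (hmix : ¬ (f a ∈ X ↔ f b ∈ X)) :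
    ∃ k l, a ≤ k ∧ k ≤ b ∧ a ≤ l ∧ l ≤ b ∧ G.Adj (f k) (f l) ∧ f k ∈ X ∧ f l ∉ X := by
  by_cases ha : f a ∈ X
  · have hb : f b ∉ X := fun h => hmix ⟨fun _ => h, fun _ => ha⟩
    obtain ⟨k, h1, h2, h3, h4⟩ := nat_ivt (fun k => f k ∈ X) hab ha hb
    exact ⟨k, k+1, h1, by omega, by omega, by omega, hadj k h1 h2, h3, h4⟩
  · have hb : f b ∈ X := by
      by_contra hb
      exact hmix ⟨fun h => absurd h ha, fun h => absurd h hb⟩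
    obtain ⟨k, h1, h2, h3, h4⟩ := nat_ivt (fun k => f k ∉ X) hab ha (not_not.mpr hb)
    exact ⟨k+1, k, by omega, by omega, h1, by omega, (hadj k h1 h2).symm,
      not_not.mp h4, h3⟩

lemma reachable_invariant {H : SimpleGraph V} (P : V → Prop)
    (hP : ∀ x y, H.Adj x y → (P x ↔ P y)) {u v : V} (h : H.Reachable u v) :
    P u ↔ P v := by
  obtain ⟨w⟩ := h
  induction w with
  | nil => exact Iff.rfl
  | cons h p ih => exact (hP _ _ h).trans ih

lemma isInducedCutMatching_empty (X Y : Set V) : IsInducedCutMatching G X Y ∅ := by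
  constructor <;> (intro p hp; simp at hp)

lemma cutmim_le_bound [Fintype V] (X Y : Set V) :
    cutmim G X Y ≤ Fintype.card (V × V) := by
  refine csSup_le ?_ ?_
  · exact ⟨0, ∅, isInducedCutMatching_empty X Y, rfl⟩
  rintro n ⟨M, _, rfl⟩
  simpa using Finset.card_le_univ M

lemma cutmim_ge [Fintype V] (X : Set V) (t : ℕ) (data : Fin t → V × V)
    (hX : ∀ k, (data k).1 ∈ X ∧ (data k).2 ∈ Xᶜ ∧ G.Adj (data k).1 (data k).2)
    (hsep : ∀ k l, k ≠ l → ∀ x y, (x = (data k).1 ∨ x = (data k).2) →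
        (y = (data l).1 ∨ y = (data l).2) → x ≠ y ∧ ¬ G.Adj x y) :
    t ≤ cutmim G X Xᶜ := by
  classical
  have hinj : Function.Injective data := by
    intro k l hkl
    by_contra hne
    exact ((hsep k l hne (data k).1 (data l).1 (Or.inl rfl) (Or.inl rfl)).1 (by rw [hkl])).elim
  have hmem : t ∈ {n : ℕ | ∃ M : Finset (V × V), IsInducedCutMatching G X Xᶜ M ∧ M.card = n} := by
    refine ⟨Finset.image data Finset.univ, ⟨?_, ?_⟩, ?_⟩
    · rintro p hp
      obtain ⟨k, _, rfl⟩ := Finset.mem_image.mp hp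
      exact hX k
    · rintro p hp q hq hpq
      obtain ⟨k, _, rfl⟩ := Finset.mem_image.mp hp
      obtain ⟨l, _, rfl⟩ := Finset.mem_image.mp hq
      have hkl : k ≠ l := fun h => hpq (by rw [h])
      refine ⟨(hsep k l hkl _ _ (Or.inl rfl) (Or.inl rfl)).1,
        (hsep k l hkl _ _ (Or.inr rfl) (Or.inr rfl)).1,
        (hsep k l hkl _ _ (Or.inl rfl) (Or.inr rfl)).1,
        (hsep k l hkl _ _ (Or.inr rfl) (Or.inl rfl)).1,
        (hsep k l hkl _ _ (Or.inl rfl) (Or.inr rfl)).2,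
        (hsep l k hkl.symm _ _ (Or.inl rfl) (Or.inr rfl)).2⟩
    · rw [Finset.card_image_of_injective _ hinj, Finset.card_univ, Fintype.card_fin]
  refine le_csSup ⟨Fintype.card (V × V), ?_⟩ hmem
  rintro n ⟨M, _, rfl⟩
  simpa using Finset.card_le_univ M

end Generic

section TreePart

variable {L : Type*} {T : SimpleGraph L}

/-- Any walk to `a` yields reachability to `a` or `b` after deleting edge `ab`. -/
lemma reachable_delete_of_walk {a b : L} : ∀ {x y : L}, T.Walk x y →
    (T.deleteEdges {s(a, b)}).Reachable x y ∨ (T.deleteEdges {s(a, b)}).Reachable x a ∨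
      (T.deleteEdges {s(a, b)}).Reachable x b := by
  intro x y w
  induction w with
  | nil => exact Or.inl (Reachable.refl _)
  | @cons u v _ h p ih =>
    by_cases he : s(u, v) = s(a, b)
    · rw [Sym2.eq_iff] at he
      rcases he with ⟨h1, h2⟩ | ⟨h1, h2⟩
      · subst h1; exact Or.inr (Or.inl (Reachable.refl _))
      · subst h1; exact Or.inr (Or.inr (Reachable.refl _))
    · have hadj : (T.deleteEdges {s(a, b)}).Adj u v := by
        rw [SimpleGraph.deleteEdges_adj]
        exact ⟨h, by simpa using he⟩
      rcases ih with h' | h' | h'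
      · exact Or.inl (hadj.reachable.trans h')
      · exact Or.inr (Or.inl (hadj.reachable.trans h'))
      · exact Or.inr (Or.inr (hadj.reachable.trans h'))

/-- In an acyclic graph, `a` and `c` adjacent cannot be joined avoiding edge `ac`. -/
lemma no_detour (hT : T.IsAcyclic) {a c : L} (hac : T.Adj a c)
    (h : (T.deleteEdges {s(a, c)}).Reachable a c) : False := by
  classical
  obtain ⟨w⟩ := h
  have hedges : ∀ e ∈ w.edges, e ∈ T.edgeSet ∧ e ≠ s(a, c) := by
    intro e he
    have := w.edges_subset_edgeSet he
    rw [SimpleGraph.edgeSet_deleteEdges] at this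
    exact ⟨this.1, by simpa using this.2⟩
  let w' : T.Walk a c := w.transfer T (fun e he => (hedges e he).1)
  have hsub : (w'.toPath : T.Walk a c).edges ⊆ w'.edges := w'.edges_toPath_subset
  have huniq := hT.path_unique w'.toPath (SimpleGraph.Path.singleton hac)
  have hmem : s(a, c) ∈ (w'.toPath : T.Walk a c).edges := by
    rw [huniq]
    simp [SimpleGraph.Path.singleton]
  have : s(a, c) ∈ w'.edges := hsub hmem
  rw [SimpleGraph.Walk.edges_transfer] at this
  exact (hedges _ this).2 rfl

/-- Component inclusion: the `c`-side of edge `ca` is inside the `a`-side of edge `ab`. -/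
lemma comp_subset (hT : T.IsAcyclic) {a b c : L} (hab : T.Adj a b) (hca : T.Adj c a)
    (hcb : c ≠ b) {y : L} (h : (T.deleteEdges {s(c, a)}).Reachable y c) :
    (T.deleteEdges {s(a, b)}).Reachable y a ∧ y ≠ a := by
  classical
  have hya : y ≠ a := by
    rintro rfl
    apply no_detour hT hca.symm
    rwa [Sym2.eq_swap] at h
  obtain ⟨w0⟩ := h
  obtain ⟨w, hw⟩ : ∃ w : (T.deleteEdges {s(c, a)}).Walk y c, w.IsPath :=
    ⟨w0.toPath, w0.toPath.prop⟩
  have hanot : a ∉ w.support := by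
    intro hmem
    have : (T.deleteEdges {s(c, a)}).Reachable a c := ⟨w.dropUntil a hmem⟩
    apply no_detour hT hca.symm
    rwa [Sym2.eq_swap] at this
  have hedges : ∀ e ∈ w.edges, e ∈ (T.deleteEdges {s(a, b)}).edgeSet := by
    intro e he
    have h1 := w.edges_subset_edgeSet he
    rw [SimpleGraph.edgeSet_deleteEdges] at h1 ⊢
    refine ⟨h1.1, ?_⟩
    simp only [Set.mem_singleton_iff]
    rintro rfl
    exact hanot (w.fst_mem_support_of_mem_edges he)
  have hwalk : (T.deleteEdges {s(a, b)}).Walk y c := w.transfer _ hedges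
  have hlast : (T.deleteEdges {s(a, b)}).Adj c a := by
    rw [SimpleGraph.deleteEdges_adj]
    refine ⟨hca, ?_⟩
    simp only [Set.mem_singleton_iff, Sym2.eq_iff]
    rintro (⟨rfl, rfl⟩ | ⟨rfl, -⟩)
    · exact hca.ne rfl
    · exact hcb rfl
  exact ⟨hwalk.reachable.trans hlast.reachable, hya⟩

/-- Extraction of the neighbour through which a far vertex reaches `a`. -/
lemma extract_neighbor {a b x : L} (hx : (T.deleteEdges {s(a, b)}).Reachable x a)
    (hxa : x ≠ a) :
    ∃ c, T.Adj a c ∧ c ≠ b ∧ (T.deleteEdges {s(c, a)}).Reachable x c := by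
  classical
  obtain ⟨w0⟩ := hx
  obtain ⟨w, hw⟩ : ∃ w : (T.deleteEdges {s(a, b)}).Walk a x, w.IsPath :=
    ⟨w0.reverse.toPath, w0.reverse.toPath.prop⟩
  obtain ⟨c, hadj, w', rfl⟩ := SimpleGraph.Walk.exists_eq_cons_of_ne (Ne.symm hxa) w
  have hcb : c ≠ b := by
    rintro rfl
    have := hadj
    rw [SimpleGraph.deleteEdges_adj] at this
    simp at this
  have hTac : T.Adj a c := ((SimpleGraph.deleteEdges_adj).mp hadj).1
  have hanot : a ∉ w'.support := by
    have := hw.support_nodup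
    rw [SimpleGraph.Walk.support_cons] at this
    exact (List.nodup_cons.mp this).1
  have hedges : ∀ e ∈ w'.reverse.edges, e ∈ (T.deleteEdges {s(c, a)}).edgeSet := by
    intro e he
    rw [SimpleGraph.Walk.edges_reverse, List.mem_reverse] at he
    have h1 := w'.edges_subset_edgeSet he
    rw [SimpleGraph.edgeSet_deleteEdges] at h1 ⊢
    refine ⟨h1.1, ?_⟩
    simp only [Set.mem_singleton_iff]
    rintro rfl
    exact hanot (w'.snd_mem_support_of_mem_edges he)
  exact ⟨c, hTac, hcb, ⟨(w'.reverse.transfer _ hedges)⟩⟩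

end TreePart

section Balanced

variable {V : Type*} {G : SimpleGraph V}

lemma side_mem_iff {B : BranchDecomp G} {a b : B.L} {v : V} :
    v ∈ B.side a b ↔ (B.T.deleteEdges {s(a, b)}).Reachable (B.δ v) a := Iff.rfl

lemma side_swap (B : BranchDecomp G) (a b : B.L) :
    B.side b a = {v : V | (B.T.deleteEdges {s(a, b)}).Reachable (B.δ v) b} := by
  unfold BranchDecomp.side
  rw [Sym2.eq_swap]

lemma exists_balanced_edge [Finite V] (B : BranchDecomp G) (hN : 2 ≤ Nat.card V) :
    ∃ a b : B.L, B.T.Adj a b ∧ Nat.card V ≤ 3 * (B.side a b).ncard ∧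
      3 * (B.side a b).ncard ≤ 2 * Nat.card V := by
  classical
  haveI : Finite B.L := B.finite
  set N := Nat.card V with hNdef
  -- the seed edge
  have hVne : Nonempty V := (Nat.card_pos_iff.mp (by omega)).1
  obtain ⟨v0⟩ := hVne
  obtain ⟨b0, hb0⟩ := Set.ncard_eq_one.mp (B.δ_leaf v0)
  have hadj0 : B.T.Adj (B.δ v0) b0 := by
    have : b0 ∈ B.T.neighborSet (B.δ v0) := by rw [hb0]; exact rfl
    exact this
  -- every vertex lies on one side
  have hunion : ∀ (a b : B.L), B.T.Adj a b → B.side a b ∪ B.side b a = Set.univ := by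
    intro a b hab
    ext v
    simp only [Set.mem_union, Set.mem_univ, iff_true]
    obtain ⟨w⟩ := B.connected (B.δ v) a
    rcases reachable_delete_of_walk (b := b) w with h | h | h
    · exact Or.inl h
    · exact Or.inl h
    · right; rw [side_swap]; exact h
  have hsum : ∀ (a b : B.L), B.T.Adj a b → N ≤ (B.side a b).ncard + (B.side b a).ncard := by
    intro a b hab
    have := Set.ncard_union_le (B.side a b) (B.side b a)
    rw [hunion a b hab, Set.ncard_univ] at this
    omega
  -- the set of balanced-from-below directed edges
  set P : B.L × B.L → Prop :=
    fun p => B.T.Adj p.1 p.2 ∧ N ≤ 3 * (B.side p.1 p.2).ncard with hPdef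
  have hPne : ∃ p, P p := by
    have h1 := hsum _ _ hadj0
    rcases Nat.le_or_le (3 * (B.side (B.δ v0) b0).ncard) (3 * (B.side b0 (B.δ v0)).ncard)
      with h | h
    · exact ⟨(b0, B.δ v0), hadj0.symm,
        show N ≤ 3 * (B.side b0 (B.δ v0)).ncard by omega⟩
    · exact ⟨(B.δ v0, b0), hadj0,
        show N ≤ 3 * (B.side (B.δ v0) b0).ncard by omega⟩
  -- measure
  set μ : B.L × B.L → ℕ :=
    fun p => {x : B.L | (B.T.deleteEdges {s(p.1, p.2)}).Reachable x p.1}.ncard with hμdef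
  set S : Set ℕ := μ '' {p | P p} with hSdef
  have hSne : S.Nonempty := by
    obtain ⟨p, hp⟩ := hPne
    exact ⟨μ p, ⟨p, hp, rfl⟩⟩
  obtain ⟨⟨a, b⟩, hP, hμmin⟩ := Nat.sInf_mem hSne
  by_contra hcon
  push_neg at hcon
  have hcon' : 2 * N < 3 * (B.side a b).ncard := by
    have := hcon a b hP.1 hP.2
    omega
  -- extraction of x ∈ side a b via neighbours
  have hext : ∀ x ∈ B.side a b, B.δ x ≠ a →
      ∃ c, B.T.Adj a c ∧ c ≠ b ∧ (B.T.deleteEdges {s(c, a)}).Reachable (B.δ x) c := by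
    intro x hx hxa
    exact extract_neighbor hx hxa
  by_cases hleaf : (B.T.neighborSet a).ncard = 1
  · -- a is a leaf: side a b has at most one element
    obtain ⟨v, hv⟩ := B.δ_surj a hleaf
    obtain ⟨c0, hc0⟩ := Set.ncard_eq_one.mp hleaf
    have hbc0 : c0 = b := by
      have : b ∈ B.T.neighborSet a := hP.1
      rw [hc0] at this
      exact (Set.mem_singleton_iff.mp this).symm
    have hsub : B.side a b ⊆ {v} := by
      intro x hx
      by_cases hxa : B.δ x = a
      · have : x = v := B.δ_inj (by rw [hxa, hv])
        simp [this]
      · obtain ⟨c, hc1, hc2, _⟩ := hext x hx hxa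
        have : c ∈ B.T.neighborSet a := hc1
        rw [hc0] at this
        exact absurd ((Set.mem_singleton_iff.mp this).trans hbc0) hc2
    have : (B.side a b).ncard ≤ 1 := by
      have := Set.ncard_le_ncard hsub (Set.toFinite _)
      simpa using this
    omega
  · -- a is internal
    have hnoδ : ∀ x : V, B.δ x ≠ a := by
      intro x hx
      exact hleaf (hx ▸ B.δ_leaf x)
    set NB : Set B.L := B.T.neighborSet a \ {b} with hNBdef
    have hNBcard : NB.ncard ≤ 2 := by
      have h1 : (B.T.neighborSet a).ncard ≤ 3 := B.subcubic a
      have h2 : b ∈ B.T.neighborSet a := hP.1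
      have hd := Set.ncard_diff_singleton_of_mem h2
      rw [← hNBdef] at hd
      have h3 : 0 < (B.T.neighborSet a).ncard :=
        (Set.ncard_pos (Set.toFinite _)).mpr ⟨b, h2⟩
      omega
    have hsubNB : ∀ x ∈ B.side a b, ∃ c ∈ NB, x ∈ B.side c a := by
      intro x hx
      obtain ⟨c, hc1, hc2, hc3⟩ := hext x hx (hnoδ x)
      exact ⟨c, ⟨hc1, hc2⟩, hc3⟩
    -- find a good neighbour c
    have hgood : ∃ c ∈ NB, N ≤ 3 * (B.side c a).ncard := by
      by_contra hbad
      push_neg at hbad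
      have hcover : ∀ x ∈ B.side a b, ∃ c ∈ NB, x ∈ B.side c a := hsubNB
      have hNB2 : NB.ncard = 0 ∨ NB.ncard = 1 ∨ NB.ncard = 2 := by omega
      have hcard : 3 * (B.side a b).ncard ≤ 2 * (N - 1) := by
        rcases hNB2 with h0 | h1 | h2
        · rw [Set.ncard_eq_zero (Set.toFinite _)] at h0
          have : B.side a b ⊆ ∅ := by
            intro x hx
            obtain ⟨c, hc, _⟩ := hcover x hx
            rw [h0] at hc
            exact hc
          have := Set.ncard_le_ncard this (Set.toFinite _)
          simp at this
          omega
        · obtain ⟨c, hc⟩ := Set.ncard_eq_one.mp h1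
          have hsub : B.side a b ⊆ B.side c a := by
            intro x hx
            obtain ⟨c', hc', hx'⟩ := hcover x hx
            rw [hc] at hc'
            rwa [← Set.mem_singleton_iff.mp hc']
          have h1' := Set.ncard_le_ncard hsub (Set.toFinite _)
          have h2' := hbad c (by rw [hc]; exact rfl)
          omega
        · obtain ⟨c, d, hcd, hcd2⟩ := Set.ncard_eq_two.mp h2
          have hsub : B.side a b ⊆ B.side c a ∪ B.side d a := by
            intro x hx
            obtain ⟨c', hc', hx'⟩ := hcover x hx
            rw [hcd2] at hc'
            simp only [Set.mem_insert_iff, Set.mem_singleton_iff] at hc'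
            rcases hc' with rfl | rfl
            · exact Or.inl hx'
            · exact Or.inr hx'
          have h1' := Set.ncard_le_ncard hsub (Set.toFinite _)
          have h2' := Set.ncard_union_le (B.side c a) (B.side d a)
          have h3' := hbad c (by rw [hcd2]; exact Set.mem_insert _ _)
          have h4' := hbad d (by rw [hcd2]; exact Set.mem_insert_of_mem _ rfl)
          omega
      omega
    obtain ⟨c, hcNB, hcbig⟩ := hgood
    have hca : B.T.Adj c a := (hcNB.1 : B.T.Adj a c).symm
    have hcb : c ≠ b := by simpa using hcNB.2
    -- measure strictly decreases
    have hsubset : {x : B.L | (B.T.deleteEdges {s(c, a)}).Reachable x c} ⊂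
        {x : B.L | (B.T.deleteEdges {s(a, b)}).Reachable x a} := by
      constructor
      · intro y hy
        exact (comp_subset B.acyclic hP.1 hca hcb hy).1
      · intro hsup
        have ha1 : a ∈ {x : B.L | (B.T.deleteEdges {s(a, b)}).Reachable x a} :=
          Reachable.refl _
        have ha2 := hsup ha1
        exact (comp_subset B.acyclic hP.1 hca hcb ha2).2 rfl
    have hlt : μ (c, a) < μ (a, b) := Set.ncard_lt_ncard hsubset (Set.toFinite _)
    have hmem : μ (c, a) ∈ S := ⟨(c, a), ⟨hca, hcbig⟩, rfl⟩
    have := Nat.sInf_le hmem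
    omega

end Balanced

section Caterpillar

/-- The caterpillar tree used to show every graph admits a branch decomposition. -/
def catGraph (N : ℕ) : SimpleGraph (Fin N ⊕ Fin N) :=
  SimpleGraph.fromRel (fun a b =>
    (∃ i j : Fin N, a = Sum.inl i ∧ b = Sum.inl j ∧ (i : ℕ) + 1 = (j : ℕ)) ∨
    (∃ i : Fin N, a = Sum.inl i ∧ b = Sum.inr i))

lemma cat_adj {N : ℕ} {x y : Fin N ⊕ Fin N} : (catGraph N).Adj x y ↔
    (∃ i j : Fin N, x = Sum.inl i ∧ y = Sum.inl j ∧
      ((i : ℕ) + 1 = (j : ℕ) ∨ (j : ℕ) + 1 = (i : ℕ))) ∨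
    (∃ i : Fin N, x = Sum.inl i ∧ y = Sum.inr i) ∨
    (∃ i : Fin N, x = Sum.inr i ∧ y = Sum.inl i) := by
  constructor
  · rintro ⟨hne, (⟨i, j, rfl, rfl, hij⟩ | ⟨i, rfl, rfl⟩) | (⟨i, j, rfl, rfl, hij⟩ | ⟨i, rfl, rfl⟩)⟩
    · exact Or.inl ⟨i, j, rfl, rfl, Or.inl hij⟩
    · exact Or.inr (Or.inl ⟨i, rfl, rfl⟩)
    · exact Or.inl ⟨j, i, rfl, rfl, Or.inr hij⟩
    · exact Or.inr (Or.inr ⟨i, rfl, rfl⟩)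
  · rintro (⟨i, j, rfl, rfl, hij | hij⟩ | ⟨i, rfl, rfl⟩ | ⟨i, rfl, rfl⟩)
    · exact ⟨by simp only [ne_eq, Sum.inl.injEq, Fin.ext_iff]; omega,
        Or.inl (Or.inl ⟨i, j, rfl, rfl, hij⟩)⟩
    · exact ⟨by simp only [ne_eq, Sum.inl.injEq, Fin.ext_iff]; omega,
        Or.inr (Or.inl ⟨j, i, rfl, rfl, hij⟩)⟩
    · exact ⟨by simp, Or.inl (Or.inr ⟨i, rfl, rfl⟩)⟩
    · exact ⟨by simp, Or.inr (Or.inr ⟨i, rfl, rfl⟩)⟩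

lemma cat_nbhd_inr {N : ℕ} (i : Fin N) :
    (catGraph N).neighborSet (Sum.inr i) = {Sum.inl i} := by
  ext x
  simp only [SimpleGraph.mem_neighborSet, Set.mem_singleton_iff]
  rw [cat_adj]
  constructor
  · rintro (⟨p, q, h, _⟩ | ⟨p, h, _⟩ | ⟨p, h1, rfl⟩)
    · exact absurd h (by simp)
    · exact absurd h (by simp)
    · obtain rfl : i = p := by simpa using h1
      rfl
  · rintro rfl
    exact Or.inr (Or.inr ⟨i, rfl, rfl⟩)

lemma cat_connected {N : ℕ} (hN : 1 ≤ N) : (catGraph N).Connected := by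
  have h0 : (0 : ℕ) < N := hN
  haveI : Nonempty (Fin N ⊕ Fin N) := ⟨Sum.inl ⟨0, h0⟩⟩
  have key : ∀ (k : ℕ) (i : Fin N), (i : ℕ) = k →
      (catGraph N).Reachable (Sum.inl i) (Sum.inl ⟨0, h0⟩) := by
    intro k
    induction k with
    | zero =>
      intro i hi
      have : i = ⟨0, h0⟩ := Fin.ext hi
      rw [this]
    | succ k ih =>
      intro i hi
      have hk : k < N := by omega
      have hadj : (catGraph N).Adj (Sum.inl i) (Sum.inl ⟨k, hk⟩) :=
        cat_adj.mpr (Or.inl ⟨i, ⟨k, hk⟩, rfl, rfl, Or.inr (by simp [hi])⟩)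
      exact hadj.reachable.trans (ih ⟨k, hk⟩ rfl)
  have hreach : ∀ x : Fin N ⊕ Fin N, (catGraph N).Reachable x (Sum.inl ⟨0, h0⟩) := by
    intro x
    rcases x with i | i
    · exact key i i rfl
    · have hadj : (catGraph N).Adj (Sum.inr i) (Sum.inl i) :=
        cat_adj.mpr (Or.inr (Or.inr ⟨i, rfl, rfl⟩))
      exact hadj.reachable.trans (key i i rfl)
  exact ⟨fun x y => (hreach x).trans (hreach y).symm⟩

lemma cat_del_adj {N : ℕ} {e : Sym2 (Fin N ⊕ Fin N)} {x y : Fin N ⊕ Fin N}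
    (h : (catGraph N \ SimpleGraph.fromEdgeSet {e}).Adj x y) :
    (catGraph N).Adj x y ∧ s(x, y) ≠ e := by
  rw [SimpleGraph.sdiff_adj] at h
  refine ⟨h.1, fun he => h.2 ?_⟩
  rw [SimpleGraph.fromEdgeSet_adj]
  exact ⟨by simp [he], h.1.ne⟩

lemma cat_spine_not_reach {N : ℕ} (i j : Fin N) (hij : (i : ℕ) + 1 = (j : ℕ)) :
    ¬ (catGraph N \ SimpleGraph.fromEdgeSet {s(Sum.inl i, Sum.inl j)}).Reachable
      (Sum.inl i) (Sum.inl j) := by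
  intro h
  have hiff := reachable_invariant
    (H := catGraph N \ SimpleGraph.fromEdgeSet {s(Sum.inl i, Sum.inl j)})
    (fun x => Sum.elim (fun p : Fin N => (p : ℕ) ≤ (i : ℕ))
      (fun p : Fin N => (p : ℕ) ≤ (i : ℕ)) x) ?_ h
  · simp only [Sum.elim_inl] at hiff
    have := hiff.mp le_rfl
    omega
  · intro x y hxy
    obtain ⟨hadj, hne⟩ := cat_del_adj hxy
    rcases cat_adj.mp hadj with ⟨p, q, rfl, rfl, hpq⟩ | ⟨p, rfl, rfl⟩ | ⟨p, rfl, rfl⟩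
    · simp only [Sum.elim_inl]
      have hex : ¬ ((p = i ∧ q = j) ∨ (p = j ∧ q = i)) := by
        intro hc
        apply hne
        rcases hc with ⟨rfl, rfl⟩ | ⟨rfl, rfl⟩
        · rfl
        · exact Sym2.eq_swap
      rw [not_or, not_and_or, not_and_or] at hex
      obtain ⟨e1, e2⟩ := hex
      simp only [Fin.ext_iff] at e1 e2
      omega
    · simp
    · simp

lemma cat_pendant_not_reach {N : ℕ} (i : Fin N) :
    ¬ (catGraph N \ SimpleGraph.fromEdgeSet {s(Sum.inl i, Sum.inr i)}).Reachable
      (Sum.inl i) (Sum.inr i) := by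
  intro h
  have hiff := reachable_invariant
    (H := catGraph N \ SimpleGraph.fromEdgeSet {s(Sum.inl i, Sum.inr i)})
    (fun x => x = Sum.inr i) ?_ h
  · exact absurd (hiff.mpr rfl) (by simp)
  · intro x y hxy
    obtain ⟨hadj, hne⟩ := cat_del_adj hxy
    rcases cat_adj.mp hadj with ⟨p, q, rfl, rfl, hpq⟩ | ⟨p, rfl, rfl⟩ | ⟨p, rfl, rfl⟩
    · simp
    · constructor
      · intro hc; exact absurd hc (by simp)
      · intro hc
        obtain rfl : p = i := by simpa using hc
        exact (hne rfl).elim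
    · constructor
      · intro hc
        obtain rfl : p = i := by simpa using hc
        exact (hne Sym2.eq_swap).elim
      · intro hc; exact absurd hc (by simp)

lemma cat_acyclic {N : ℕ} : (catGraph N).IsAcyclic := by
  rw [SimpleGraph.isAcyclic_iff_forall_adj_isBridge]
  intro v w hvw
  rw [SimpleGraph.isBridge_iff]
  rcases cat_adj.mp hvw with ⟨i, j, rfl, rfl, hij | hij⟩ | ⟨i, rfl, rfl⟩ | ⟨i, rfl, rfl⟩
  · exact cat_spine_not_reach i j hij
  · have he : s(Sum.inl i, Sum.inl j) = s(Sum.inl j, (Sum.inl i : Fin N ⊕ Fin N)) :=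
      Sym2.eq_swap
    rw [he]
    intro h
    exact cat_spine_not_reach j i hij h.symm
  · exact cat_pendant_not_reach i
  · have he : s(Sum.inr i, Sum.inl i) = s(Sum.inl i, (Sum.inr i : Fin N ⊕ Fin N)) :=
      Sym2.eq_swap
    rw [he]
    intro h
    exact cat_pendant_not_reach i h.symm

lemma cat_subcubic {N : ℕ} (x : Fin N ⊕ Fin N) :
    ((catGraph N).neighborSet x).ncard ≤ 3 := by
  rcases x with i | i
  · have hN : 0 < N := i.pos
    set a1 : Fin N ⊕ Fin N := Sum.inr i with ha1
    set a2 : Fin N ⊕ Fin N := Sum.inl ⟨(i : ℕ) - 1, by omega⟩ with ha2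
    set a3 : Fin N ⊕ Fin N := Sum.inl ⟨((i : ℕ) + 1) % N, Nat.mod_lt _ hN⟩ with ha3
    have hsub : (catGraph N).neighborSet (Sum.inl i) ⊆ {a1, a2, a3} := by
      intro y hy
      simp only [Set.mem_insert_iff, Set.mem_singleton_iff]
      rcases cat_adj.mp hy with ⟨p, q, hp, rfl, hpq⟩ | ⟨p, hp, rfl⟩ | ⟨p, hp, rfl⟩
      · obtain rfl : p = i := by simpa using hp.symm
        rcases hpq with h1 | h1
        · refine Or.inr (Or.inr ?_)
          rw [ha3]
          congr 1
          refine Fin.ext ?_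
          show (q : ℕ) = ((p : ℕ) + 1) % N
          rw [h1, Nat.mod_eq_of_lt q.isLt]
        · refine Or.inr (Or.inl ?_)
          rw [ha2]
          congr 1
          refine Fin.ext ?_
          show (q : ℕ) = (p : ℕ) - 1
          omega
      · obtain rfl : p = i := by simpa using hp.symm
        exact Or.inl rfl
      · exact absurd hp (by simp)
    calc ((catGraph N).neighborSet (Sum.inl i)).ncard
        ≤ ({a1, a2, a3} : Set (Fin N ⊕ Fin N)).ncard :=
          Set.ncard_le_ncard hsub (Set.toFinite _)
      _ ≤ ({a2, a3} : Set (Fin N ⊕ Fin N)).ncard + 1 := Set.ncard_insert_le _ _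
      _ ≤ (({a3} : Set (Fin N ⊕ Fin N)).ncard + 1) + 1 := by
          have := Set.ncard_insert_le a2 ({a3} : Set (Fin N ⊕ Fin N))
          omega
      _ ≤ 3 := by rw [Set.ncard_singleton]
  · rw [cat_nbhd_inr]
    simp

/-- Every graph on a finite vertex type with at least two elements admits a
branch decomposition. -/
lemma exists_branchDecomp {V : Type*} [Finite V] (G : SimpleGraph V)
    (hN : 2 ≤ Nat.card V) : Nonempty (BranchDecomp G) := by
  set N := Nat.card V with hNdef
  have hN1 : 1 ≤ N := by omega
  let e : V ≃ Fin N := Finite.equivFin V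
  refine ⟨⟨Fin N ⊕ Fin N, catGraph N, inferInstance, cat_connected hN1, cat_acyclic,
    cat_subcubic, fun v => Sum.inr (e v), ?_, ?_, ?_⟩⟩
  · intro x y hxy
    exact e.injective (Sum.inr_injective hxy)
  · intro v
    rw [cat_nbhd_inr]
    simp
  · intro x hx
    rcases x with i | i
    · exfalso
      have h2 : 2 ≤ ((catGraph N).neighborSet (Sum.inl i)).ncard := by
      -- two distinct neighbours of inl i
        have hmem1 : (Sum.inr i : Fin N ⊕ Fin N) ∈ (catGraph N).neighborSet (Sum.inl i) :=
          cat_adj.mpr (Or.inr (Or.inl ⟨i, rfl, rfl⟩))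
        by_cases hlt : (i : ℕ) + 1 < N
        · have hmem2 : (Sum.inl ⟨(i : ℕ) + 1, hlt⟩ : Fin N ⊕ Fin N) ∈
              (catGraph N).neighborSet (Sum.inl i) :=
            cat_adj.mpr (Or.inl ⟨i, ⟨(i : ℕ) + 1, hlt⟩, rfl, rfl, Or.inl rfl⟩)
          have := (Set.one_lt_ncard_iff (Set.toFinite _)).mpr ⟨_, _, hmem2, hmem1, by simp⟩
          omega
        · have hi1 : 1 ≤ (i : ℕ) := by have := i.isLt; omega
          have hlt2 : (i : ℕ) - 1 < N := by omega
          have hmem2 : (Sum.inl ⟨(i : ℕ) - 1, hlt2⟩ : Fin N ⊕ Fin N) ∈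
              (catGraph N).neighborSet (Sum.inl i) :=
            cat_adj.mpr (Or.inl ⟨i, ⟨(i : ℕ) - 1, hlt2⟩, rfl, rfl, Or.inr (by simp; omega)⟩)
          have := (Set.one_lt_ncard_iff (Set.toFinite _)).mpr ⟨_, _, hmem2, hmem1, by simp⟩
          omega
      omega
    · exact ⟨e.symm i, by simp⟩

end Caterpillar

section WallBasic

/-- Vertex type of the elementary wall. -/
abbrev Vw (n : ℕ) := {v : Fin n × Fin (2 * n) // ((wallPre n n).neighborSet v).ncard ≠ 1}

lemma wallPre_fromRel_adj {h r : ℕ} {a b : Fin h × Fin (2 * r)} :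
    (wallPre h r).Adj a b ↔ a ≠ b ∧
      (((a.1 = b.1 ∧ (a.2 : ℕ) + 1 = (b.2 : ℕ)) ∨
        (a.2 = b.2 ∧ (a.1 : ℕ) + 1 = (b.1 : ℕ) ∧ (a.1 : ℕ) % 2 = (a.2 : ℕ) % 2)) ∨
       ((b.1 = a.1 ∧ (b.2 : ℕ) + 1 = (a.2 : ℕ)) ∨
        (b.2 = a.2 ∧ (b.1 : ℕ) + 1 = (a.1 : ℕ) ∧ (b.1 : ℕ) % 2 = (b.2 : ℕ) % 2))) := by
  rw [wallPre, SimpleGraph.fromRel_adj]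

lemma wallPre_adj_horiz {h r : ℕ} {a b : Fin h × Fin (2 * r)}
    (hrow : a.1 = b.1) (hcol : (a.2 : ℕ) + 1 = (b.2 : ℕ)) : (wallPre h r).Adj a b := by
  rw [wallPre_fromRel_adj]
  refine ⟨?_, Or.inl (Or.inl ⟨hrow, hcol⟩)⟩
  intro hab
  rw [hab] at hcol
  omega

lemma wallPre_adj_vert {h r : ℕ} {a b : Fin h × Fin (2 * r)}
    (hcol : a.2 = b.2) (hrow : (a.1 : ℕ) + 1 = (b.1 : ℕ))
    (hpar : (a.1 : ℕ) % 2 = (a.2 : ℕ) % 2) : (wallPre h r).Adj a b := by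
  rw [wallPre_fromRel_adj]
  refine ⟨?_, Or.inl (Or.inr ⟨hcol, hrow, hpar⟩)⟩
  intro hab
  rw [hab] at hrow
  omega

lemma wallPre_adj_close {h r : ℕ} {a b : Fin h × Fin (2 * r)}
    (hadj : (wallPre h r).Adj a b) :
    ((a.1 : ℕ) = (b.1 : ℕ) ∧ ((a.2 : ℕ) + 1 = (b.2 : ℕ) ∨ (b.2 : ℕ) + 1 = (a.2 : ℕ))) ∨
    ((a.2 : ℕ) = (b.2 : ℕ) ∧ ((a.1 : ℕ) + 1 = (b.1 : ℕ) ∨ (b.1 : ℕ) + 1 = (a.1 : ℕ))) := by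
  rw [wallPre_fromRel_adj] at hadj
  rcases hadj.2 with (⟨h1, h2⟩ | ⟨h1, h2, _⟩) | (⟨h1, h2⟩ | ⟨h1, h2, _⟩)
  · exact Or.inl ⟨by rw [h1], Or.inl h2⟩
  · exact Or.inr ⟨by rw [h1], Or.inl h2⟩
  · exact Or.inl ⟨by rw [h1], Or.inr h2⟩
  · exact Or.inr ⟨by rw [h1], Or.inr h2⟩

lemma ew_adj {n : ℕ} {u v : Vw n} :
    (elementaryWall n n).Adj u v ↔ (wallPre n n).Adj u.1 v.1 := Iff.rfl

/-- Any vertex with column strictly inside the wall survives. -/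
lemma wall_survivor {n : ℕ} (i : Fin n) (j : Fin (2 * n))
    (h1 : 1 ≤ (j : ℕ)) (h2 : (j : ℕ) ≤ 2 * n - 2) :
    ((wallPre n n).neighborSet (i, j)).ncard ≠ 1 := by
  have hn : 0 < n := i.pos
  have hjlt : (j : ℕ) < 2 * n := j.isLt
  have hlt1 : (j : ℕ) - 1 < 2 * n := by omega
  have hlt2 : (j : ℕ) + 1 < 2 * n := by omega
  have hm1 : ((i, (⟨(j : ℕ) - 1, hlt1⟩ : Fin (2 * n))) : Fin n × Fin (2 * n)) ∈
      (wallPre n n).neighborSet (i, j) := by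
    have : (wallPre n n).Adj (i, ⟨(j : ℕ) - 1, hlt1⟩) (i, j) :=
      wallPre_adj_horiz rfl (by simp; omega)
    exact this.symm
  have hm2 : ((i, (⟨(j : ℕ) + 1, hlt2⟩ : Fin (2 * n))) : Fin n × Fin (2 * n)) ∈
      (wallPre n n).neighborSet (i, j) :=
    wallPre_adj_horiz rfl (by simp)
  have h2' := (Set.one_lt_ncard_iff (Set.toFinite _)).mpr
    ⟨_, _, hm1, hm2, by simp [Prod.ext_iff, Fin.ext_iff] <;> omega⟩
  omega

/-- Make a wall vertex from coordinates with an interior column. -/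
def wv {n : ℕ} (i j : ℕ) (hi : i < n) (h1 : 1 ≤ j) (h2 : j ≤ 2 * n - 2) : Vw n :=
  ⟨(⟨i, hi⟩, ⟨j, by omega⟩), wall_survivor _ _ h1 h2⟩

@[simp] lemma wv_row {n : ℕ} {i j : ℕ} (hi : i < n) (h1 : 1 ≤ j) (h2 : j ≤ 2 * n - 2) :
    (((wv i j hi h1 h2).1.1 : Fin n) : ℕ) = i := rfl

@[simp] lemma wv_col {n : ℕ} {i j : ℕ} (hi : i < n) (h1 : 1 ≤ j) (h2 : j ≤ 2 * n - 2) :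
    (((wv i j hi h1 h2).1.2 : Fin (2 * n)) : ℕ) = j := rfl

lemma ew_adj_close {n : ℕ} {u w : Vw n} (h : (elementaryWall n n).Adj u w) :
    (((u.1.1 : ℕ) = (w.1.1 : ℕ) ∧ ((u.1.2 : ℕ) + 1 = (w.1.2 : ℕ) ∨ (w.1.2 : ℕ) + 1 = (u.1.2 : ℕ))) ∨
     ((u.1.2 : ℕ) = (w.1.2 : ℕ) ∧ ((u.1.1 : ℕ) + 1 = (w.1.1 : ℕ) ∨ (w.1.1 : ℕ) + 1 = (u.1.1 : ℕ)))) :=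
  wallPre_adj_close (ew_adj.mp h)

lemma ew_adj_of_coords_horiz {n : ℕ} {u w : Vw n}
    (hrow : u.1.1 = w.1.1) (hcol : (u.1.2 : ℕ) + 1 = (w.1.2 : ℕ)) :
    (elementaryWall n n).Adj u w :=
  ew_adj.mpr (wallPre_adj_horiz hrow hcol)

lemma ew_adj_of_coords_vert {n : ℕ} {u w : Vw n}
    (hcol : u.1.2 = w.1.2) (hrow : (u.1.1 : ℕ) + 1 = (w.1.1 : ℕ))
    (hpar : (u.1.1 : ℕ) % 2 = (u.1.2 : ℕ) % 2) :
    (elementaryWall n n).Adj u w :=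
  ew_adj.mpr (wallPre_adj_vert hcol hrow hpar)

end WallBasic

section WallCross

variable {n : ℕ}

lemma row_cross (S : Set (Vw n)) (x y : Vw n) (hrowxy : x.1.1 = y.1.1)
    (hcols : (x.1.2 : ℕ) ≤ (y.1.2 : ℕ)) (hne : ¬ (x ∈ S ↔ y ∈ S)) :
    ∃ u w : Vw n, (elementaryWall n n).Adj u w ∧ u ∈ S ∧ w ∉ S ∧
      u.1.1 = x.1.1 ∧ w.1.1 = x.1.1 := by
  classical
  have hblt : (y.1.2 : ℕ) < 2 * n := y.1.2.isLt
  have hab : (x.1.2 : ℕ) < (y.1.2 : ℕ) := by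
    rcases Nat.lt_or_ge (x.1.2 : ℕ) (y.1.2 : ℕ) with h | h
    · exact h
    · exfalso
      have hxy : x = y := Subtype.ext (Prod.ext hrowxy (Fin.ext (by omega)))
      rw [hxy] at hne
      exact hne Iff.rfl
  set a := (x.1.2 : ℕ) with hadef
  set b := (y.1.2 : ℕ) with hbdef
  set f : ℕ → Vw n := fun k =>
    if hk1 : k ≤ a then x else if hk2 : b ≤ k then y
    else wv (x.1.1 : ℕ) k x.1.1.isLt (by omega) (by omega) with hf
  have hfa : f a = x := by rw [hf]; simp
  have hfb : f b = y := by rw [hf]; simp; omega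
  have hcoords : ∀ k, a ≤ k → k ≤ b → ((f k).1.1 = x.1.1 ∧ ((f k).1.2 : ℕ) = k) := by
    intro k h1 h2
    rw [hf]
    by_cases hk1 : k ≤ a
    · have hka : k = a := by omega
      simp only [dif_pos hk1]
      refine ⟨by trivial, ?_⟩
      omega
    · by_cases hk2 : b ≤ k
      · have hkb : k = b := by omega
        simp only [dif_neg hk1, dif_pos hk2]
        exact ⟨hrowxy.symm, by omega⟩
      · simp only [dif_neg hk1, dif_neg hk2]
        exact ⟨Fin.ext (by rw [wv_row]), by rw [wv_col]⟩
  have hadj : ∀ k, a ≤ k → k < b → (elementaryWall n n).Adj (f k) (f (k + 1)) := by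
    intro k h1 h2
    obtain ⟨hr1, hc1⟩ := hcoords k h1 (by omega)
    obtain ⟨hr2, hc2⟩ := hcoords (k + 1) (by omega) (by omega)
    exact ew_adj_of_coords_horiz (hr1.trans hr2.symm) (by omega)
  have hne' : ¬ (f a ∈ S ↔ f b ∈ S) := by rw [hfa, hfb]; exact hne
  obtain ⟨k, l, hk1, hk2, hl1, hl2, hadj', hkS, hlS⟩ :=
    exists_crossing (G := elementaryWall n n) (le_of_lt hab) hadj hne'
  exact ⟨f k, f l, hadj', hkS, hlS, (hcoords k hk1 hk2).1, (hcoords l hl1 hl2).1⟩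

lemma channel_cross (S : Set (Vw n)) (lo hi c : ℕ)
    (hlo : lo < hi) (hhi : hi < n) (hc1 : 1 ≤ c) (hpar : c % 2 = lo % 2)
    (hc2 : c + (hi - lo) ≤ 2 * n - 2)
    (hS : ∀ v : Vw n, (v.1.1 : ℕ) = lo → v ∈ S)
    (hS' : ∀ v : Vw n, (v.1.1 : ℕ) = hi → v ∉ S) :
    ∃ u w : Vw n, (elementaryWall n n).Adj u w ∧ u ∈ S ∧ w ∉ S ∧
      c ≤ (u.1.2 : ℕ) ∧ (u.1.2 : ℕ) ≤ c + (hi - lo) ∧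
      c ≤ (w.1.2 : ℕ) ∧ (w.1.2 : ℕ) ≤ c + (hi - lo) := by
  classical
  set d := hi - lo with hd
  set f : ℕ → Vw n := fun m =>
    wv (lo + (min m (2 * d) + 1) / 2) (c + (min m (2 * d)) / 2)
      (by omega) (by omega) (by omega) with hf
  have hcoords : ∀ m, m ≤ 2 * d →
      ((f m).1.1 : ℕ) = lo + (m + 1) / 2 ∧ ((f m).1.2 : ℕ) = c + m / 2 := by
    intro m hm
    rw [hf]
    constructor
    · rw [wv_row, min_eq_left hm]
    · rw [wv_col, min_eq_left hm]
  have hadj : ∀ m, 0 ≤ m → m < 2 * d → (elementaryWall n n).Adj (f m) (f (m + 1)) := by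
    intro m _ hm
    obtain ⟨hr1, hc1'⟩ := hcoords m (by omega)
    obtain ⟨hr2, hc2'⟩ := hcoords (m + 1) (by omega)
    rcases Nat.even_or_odd m with ⟨q, hq⟩ | ⟨q, hq⟩
    · -- vertical step
      refine ew_adj_of_coords_vert (Fin.ext ?_) ?_ ?_
      · omega
      · omega
      · omega
    · -- horizontal step
      refine ew_adj_of_coords_horiz (Fin.ext ?_) ?_
      · omega
      · omega
  have h0 : ((f 0).1.1 : ℕ) = lo := by
    obtain ⟨h, _⟩ := hcoords 0 (by omega); omega
  have hendrow : ((f (2 * d)).1.1 : ℕ) = hi := by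
    obtain ⟨h, _⟩ := hcoords (2 * d) le_rfl; omega
  have hne' : ¬ (f 0 ∈ S ↔ f (2 * d) ∈ S) := by
    intro hiff
    exact hS' _ hendrow (hiff.mp (hS _ h0))
  obtain ⟨k, l, hk1, hk2, hl1, hl2, hadj', hkS, hlS⟩ :=
    exists_crossing (G := elementaryWall n n) (Nat.zero_le _) (hadj) hne'
  obtain ⟨_, hck⟩ := hcoords k hk2
  obtain ⟨_, hcl⟩ := hcoords l hl2
  exact ⟨f k, f l, hadj', hkS, hlS, by omega, by omega, by omega, by omega⟩

/-- Counting: vertices with row in `S` number at most `|S| * 2n`. -/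
lemma rows_bound (S : Finset (Fin n)) :
    {v : Vw n | v.1.1 ∈ S}.ncard ≤ S.card * (2 * n) := by
  classical
  induction S using Finset.induction_on with
  | empty => simp
  | @insert r S hrS ih =>
    have hrow : {v : Vw n | v.1.1 = r}.ncard ≤ 2 * n := by
      have := Set.ncard_le_ncard_of_injOn (fun v : Vw n => v.1.2)
        (fun v _ => Set.mem_univ v.1.2)
        (fun v hv w hw hvw =>
          Subtype.ext (Prod.ext ((show v.1.1 = r from hv).trans
            (show w.1.1 = r from hw).symm) hvw))
        (Set.toFinite (Set.univ : Set (Fin (2 * n))))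
      rwa [Set.ncard_univ, Nat.card_eq_fintype_card, Fintype.card_fin] at this
    have hsplit : {v : Vw n | v.1.1 ∈ insert r S} ⊆
        {v : Vw n | v.1.1 = r} ∪ {v : Vw n | v.1.1 ∈ S} := by
      intro v hv
      simp only [Set.mem_setOf_eq, Finset.mem_insert] at hv
      rcases hv with h | h
      · exact Or.inl h
      · exact Or.inr h
    calc {v : Vw n | v.1.1 ∈ insert r S}.ncard
        ≤ ({v : Vw n | v.1.1 = r} ∪ {v : Vw n | v.1.1 ∈ S}).ncard :=
          Set.ncard_le_ncard hsplit (Set.toFinite _)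
      _ ≤ {v : Vw n | v.1.1 = r}.ncard + {v : Vw n | v.1.1 ∈ S}.ncard :=
          Set.ncard_union_le _ _
      _ ≤ 2 * n + S.card * (2 * n) := by
          have := ih
          omega
      _ = (insert r S).card * (2 * n) := by
          rw [Finset.card_insert_of_notMem hrS]
          ring

/-- The wall has at least `2n² - 3` vertices. -/
lemma wall_card_lower (hn : 2 ≤ n) : n * (2 * n) - 3 ≤ Nat.card (Vw n) := by
  classical
  have hnpos : 0 < n := by omega
  have h2n : 1 ≤ 2 * n := by omega
  set e1 : Fin n × Fin (2 * n) := (⟨n - 1, by omega⟩, ⟨0, by omega⟩) with he1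
  set e2 : Fin n × Fin (2 * n) := (⟨0, by omega⟩, ⟨2 * n - 1, by omega⟩) with he2
  set e3 : Fin n × Fin (2 * n) := (⟨n - 1, by omega⟩, ⟨2 * n - 1, by omega⟩) with he3
  set E : Set (Fin n × Fin (2 * n)) := {e1, e2, e3} with hE
  have hP : ∀ v : Fin n × Fin (2 * n), v ∉ E →
      ((wallPre n n).neighborSet v).ncard ≠ 1 := by
    rintro ⟨i, j⟩ hv
    simp only [hE, Set.mem_insert_iff, Set.mem_singleton_iff, he1, he2, he3,
      Prod.mk.injEq, Fin.ext_iff] at hv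
    push_neg at hv
    by_cases hj1 : 1 ≤ (j : ℕ) ∧ (j : ℕ) ≤ 2 * n - 2
    · exact wall_survivor i j hj1.1 hj1.2
    · have hjlt : (j : ℕ) < 2 * n := j.isLt
      have hcase : (j : ℕ) = 0 ∨ (j : ℕ) = 2 * n - 1 := by omega
      rcases hcase with hj | hj
      · -- column 0 : i ≠ n - 1
        have hine : (i : ℕ) ≠ n - 1 := by
          intro hc
          exact (hv.1 hc).elim hj
        have hilt : (i : ℕ) < n := i.isLt
        have hm1 : ((i, (⟨1, by omega⟩ : Fin (2 * n))) : Fin n × Fin (2 * n)) ∈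
            (wallPre n n).neighborSet (i, j) :=
          wallPre_adj_horiz rfl (by simp; omega)
        by_cases hpar : (i : ℕ) % 2 = 0
        · set i2 : Fin n := ⟨(i : ℕ) + 1, by omega⟩ with hi2def
          have hi2v : (i2 : ℕ) = (i : ℕ) + 1 := rfl
          have hm2 : ((i2, j) : Fin n × Fin (2 * n)) ∈
              (wallPre n n).neighborSet (i, j) :=
            wallPre_adj_vert rfl (show (i : ℕ) + 1 = (i2 : ℕ) by omega)
              (show (i : ℕ) % 2 = (j : ℕ) % 2 by omega)
          have := (Set.one_lt_ncard_iff (Set.toFinite _)).mpr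
            ⟨_, _, hm1, hm2, by simp [Prod.ext_iff, Fin.ext_iff] <;> omega⟩
          omega
        · set i2 : Fin n := ⟨(i : ℕ) - 1, by omega⟩ with hi2def
          have hi2v : (i2 : ℕ) = (i : ℕ) - 1 := rfl
          have hm2 : ((i2, j) : Fin n × Fin (2 * n)) ∈
              (wallPre n n).neighborSet (i, j) := by
            have : (wallPre n n).Adj (i2, j) (i, j) :=
              wallPre_adj_vert rfl (show (i2 : ℕ) + 1 = (i : ℕ) by omega)
                (show (i2 : ℕ) % 2 = (j : ℕ) % 2 by omega)
            exact this.symm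
          have := (Set.one_lt_ncard_iff (Set.toFinite _)).mpr
            ⟨_, _, hm1, hm2, by simp [Prod.ext_iff, Fin.ext_iff] <;> omega⟩
          omega
      · -- column 2n - 1 : i ∉ {0, n-1}
        have hine : (i : ℕ) ≠ 0 ∧ (i : ℕ) ≠ n - 1 := by
          constructor
          · intro hc; exact (hv.2.1 hc) hj
          · intro hc; exact (hv.2.2 hc) hj
        have hilt : (i : ℕ) < n := i.isLt
        have hm1 : ((i, (⟨2 * n - 2, by omega⟩ : Fin (2 * n))) : Fin n × Fin (2 * n)) ∈
            (wallPre n n).neighborSet (i, j) := by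
          have : (wallPre n n).Adj (i, (⟨2 * n - 2, by omega⟩ : Fin (2 * n))) (i, j) :=
            wallPre_adj_horiz rfl (by simp; omega)
          exact this.symm
        by_cases hpar : (i : ℕ) % 2 = 1
        · set i2 : Fin n := ⟨(i : ℕ) + 1, by omega⟩ with hi2def
          have hi2v : (i2 : ℕ) = (i : ℕ) + 1 := rfl
          have hm2 : ((i2, j) : Fin n × Fin (2 * n)) ∈
              (wallPre n n).neighborSet (i, j) :=
            wallPre_adj_vert rfl (show (i : ℕ) + 1 = (i2 : ℕ) by omega)
              (show (i : ℕ) % 2 = (j : ℕ) % 2 by omega)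
          have := (Set.one_lt_ncard_iff (Set.toFinite _)).mpr
            ⟨_, _, hm1, hm2, by simp [Prod.ext_iff, Fin.ext_iff] <;> omega⟩
          omega
        · set i2 : Fin n := ⟨(i : ℕ) - 1, by omega⟩ with hi2def
          have hi2v : (i2 : ℕ) = (i : ℕ) - 1 := rfl
          have hm2 : ((i2, j) : Fin n × Fin (2 * n)) ∈
              (wallPre n n).neighborSet (i, j) := by
            have : (wallPre n n).Adj (i2, j) (i, j) :=
              wallPre_adj_vert rfl (show (i2 : ℕ) + 1 = (i : ℕ) by omega)
                (show (i2 : ℕ) % 2 = (j : ℕ) % 2 by omega)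
            exact this.symm
          have := (Set.one_lt_ncard_iff (Set.toFinite _)).mpr
            ⟨_, _, hm1, hm2, by simp [Prod.ext_iff, Fin.ext_iff] <;> omega⟩
          omega
  have hcard : Nat.card (Vw n) =
      Set.ncard {v : Fin n × Fin (2 * n) | ((wallPre n n).neighborSet v).ncard ≠ 1} :=
    Nat.card_coe_set_eq _
  have hsub : Set.univ \ E ⊆
      {v : Fin n × Fin (2 * n) | ((wallPre n n).neighborSet v).ncard ≠ 1} := by
    intro v hv
    exact hP v hv.2
  have h1 : (Set.univ \ E).ncard ≤
      Set.ncard {v : Fin n × Fin (2 * n) | ((wallPre n n).neighborSet v).ncard ≠ 1} :=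
    Set.ncard_le_ncard hsub (Set.toFinite _)
  have h2 : (Set.univ : Set (Fin n × Fin (2 * n))).ncard ≤ (Set.univ \ E).ncard + E.ncard :=
    calc (Set.univ : Set (Fin n × Fin (2 * n))).ncard
        = ((Set.univ \ E) ∪ E).ncard := by rw [Set.diff_union_self, Set.univ_union]
      _ ≤ (Set.univ \ E).ncard + E.ncard := Set.ncard_union_le _ _
  have h3 : E.ncard ≤ 3 := by
    rw [hE]
    calc ({e1, e2, e3} : Set (Fin n × Fin (2 * n))).ncard
        ≤ ({e2, e3} : Set (Fin n × Fin (2 * n))).ncard + 1 := Set.ncard_insert_le _ _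
      _ ≤ (({e3} : Set (Fin n × Fin (2 * n))).ncard + 1) + 1 := by
          have := Set.ncard_insert_le e2 ({e3} : Set (Fin n × Fin (2 * n)))
          omega
      _ ≤ 3 := by rw [Set.ncard_singleton]
  have h4 : (Set.univ : Set (Fin n × Fin (2 * n))).ncard = n * (2 * n) := by
    rw [Set.ncard_univ]
    simp [Nat.card_eq_fintype_card]
  omega

end WallCross

section WallCut

variable {n : ℕ}

def rowMixed (X : Set (Vw n)) (r : Fin n) : Prop :=
  (∃ v : Vw n, v.1.1 = r ∧ v ∈ X) ∧ (∃ v : Vw n, v.1.1 = r ∧ v ∉ X)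

def rowPure (X : Set (Vw n)) (r : Fin n) : Prop := ∀ v : Vw n, v.1.1 = r → v ∈ X

lemma row_dichotomy (X : Set (Vw n)) (r : Fin n) (h : ¬ rowMixed X r) :
    rowPure X r ∨ rowPure Xᶜ r := by
  rw [rowMixed, not_and_or] at h
  rcases h with h | h
  · push_neg at h
    right
    intro v hv
    exact h v hv
  · push_neg at h
    left
    intro v hv
    exact h v hv

lemma pure_interval (X : Set (Vw n)) :
    ∀ (d : ℕ) (p q : Fin n), (q : ℕ) - (p : ℕ) = d → (p : ℕ) < (q : ℕ) →
      rowPure X p → rowPure Xᶜ q →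
      ∃ lo hi : Fin n, (lo : ℕ) < (hi : ℕ) ∧
        ((rowPure X lo ∧ rowPure Xᶜ hi) ∨ (rowPure Xᶜ lo ∧ rowPure X hi)) ∧
        ∀ r : Fin n, (lo : ℕ) < (r : ℕ) → (r : ℕ) < (hi : ℕ) → rowMixed X r := by
  intro d
  induction d using Nat.strong_induction_on with
  | _ d ih =>
    intro p q hd hpq hp hq
    by_cases hall : ∀ r : Fin n, (p : ℕ) < (r : ℕ) → (r : ℕ) < (q : ℕ) → rowMixed X r
    · exact ⟨p, q, hpq, Or.inl ⟨hp, hq⟩, hall⟩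
    · push_neg at hall
      obtain ⟨m, hm1, hm2, hmnot⟩ := hall
      rcases row_dichotomy X m hmnot with hmX | hmC
      · obtain ⟨lo, hi, h1, h2, h3⟩ := ih ((q : ℕ) - (m : ℕ)) (by omega) m q rfl
          (by omega) hmX hq
        exact ⟨lo, hi, h1, h2, h3⟩
      · obtain ⟨lo, hi, h1, h2, h3⟩ := ih ((m : ℕ) - (p : ℕ)) (by omega) p m rfl
          (by omega) hp hmC
        exact ⟨lo, hi, h1, h2, h3⟩

lemma wall_cut (hn : 7 ≤ n) (t : ℕ) (ht1 : 1 ≤ t)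
    (harith : 2 * t * t + 2 * t + 4 ≤ 2 * n)
    (harith2 : 3 * ((2 * t) * (2 * n)) + 6 ≤ n * (2 * n))
    (X : Set (Vw n))
    (hbal1 : Nat.card (Vw n) ≤ 3 * X.ncard)
    (hbal2 : 3 * X.ncard ≤ 2 * Nat.card (Vw n)) :
    t ≤ cutmim (elementaryWall n n) X Xᶜ := by
  classical
  haveI : Fintype (Vw n) := Fintype.ofFinite _
  set M : Finset (Fin n) := Finset.univ.filter (fun r => rowMixed X r) with hM
  by_cases hcase : 2 * t - 1 ≤ M.card
  · -- Case A : many mixed rows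
    set emb := M.orderEmbOfCardLe hcase with hemb
    have hembmem : ∀ a, emb a ∈ M := fun a => M.orderEmbOfCardLe_mem hcase a
    have h2k : ∀ k : Fin t, 2 * (k : ℕ) < 2 * t - 1 := by
      intro k
      have := k.isLt
      omega
    set rk : Fin t → Fin n := fun k => emb ⟨2 * (k : ℕ), h2k k⟩ with hrk
    have hgap : ∀ k l : Fin t, (k : ℕ) < (l : ℕ) → (rk k : ℕ) + 2 ≤ (rk l : ℕ) := by
      intro k l hkl
      have hkt := k.isLt
      have hlt := l.isLt
      have hmid : 2 * (k : ℕ) + 1 < 2 * t - 1 := by omega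
      have h1 : emb ⟨2 * (k : ℕ), h2k k⟩ < emb ⟨2 * (k : ℕ) + 1, hmid⟩ :=
        emb.strictMono (Fin.mk_lt_mk.mpr (by omega))
      have h2 : emb ⟨2 * (k : ℕ) + 1, hmid⟩ < emb ⟨2 * (l : ℕ), h2k l⟩ :=
        emb.strictMono (Fin.mk_lt_mk.mpr (by omega))
      have hv1 : (emb ⟨2 * (k : ℕ), h2k k⟩ : ℕ) < (emb ⟨2 * (k : ℕ) + 1, hmid⟩ : ℕ) := h1
      have hv2 : (emb ⟨2 * (k : ℕ) + 1, hmid⟩ : ℕ) < (emb ⟨2 * (l : ℕ), h2k l⟩ : ℕ) := h2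
      simp only [hrk]
      omega
    have hpick : ∀ k : Fin t, ∃ u w : Vw n, (elementaryWall n n).Adj u w ∧ u ∈ X ∧ w ∉ X ∧
        u.1.1 = rk k ∧ w.1.1 = rk k := by
      intro k
      have hmix : rowMixed X (rk k) := by
        have hmm := hembmem ⟨2 * (k : ℕ), h2k k⟩
        rw [hM] at hmm
        exact (Finset.mem_filter.mp hmm).2
      obtain ⟨⟨vx, hvx1, hvx2⟩, ⟨vy, hvy1, hvy2⟩⟩ := hmix
      rcases Nat.le_or_le (vx.1.2 : ℕ) (vy.1.2 : ℕ) with hc | hc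
      · obtain ⟨u, w, h1, h2, h3, h4, h5⟩ := row_cross X vx vy (hvx1.trans hvy1.symm) hc
          (fun hiff => hvy2 (hiff.mp hvx2))
        exact ⟨u, w, h1, h2, h3, h4.trans hvx1, h5.trans hvx1⟩
      · obtain ⟨u, w, h1, h2, h3, h4, h5⟩ := row_cross X vy vx (hvy1.trans hvx1.symm) hc
          (fun hiff => hvy2 (hiff.mpr hvx2))
        exact ⟨u, w, h1, h2, h3, h4.trans hvy1, h5.trans hvy1⟩
    choose u w hadj hu hw hru hrw using hpick
    apply cutmim_ge X t (fun k => (u k, w k))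
    · intro k
      exact ⟨hu k, hw k, hadj k⟩
    · intro k l hkl x y hx hy
      have hxr : (x.1.1 : ℕ) = (rk k : ℕ) := by
        rcases hx with rfl | rfl
        · exact congrArg Fin.val (hru k)
        · exact congrArg Fin.val (hrw k)
      have hyr : (y.1.1 : ℕ) = (rk l : ℕ) := by
        rcases hy with rfl | rfl
        · exact congrArg Fin.val (hru l)
        · exact congrArg Fin.val (hrw l)
      have hfar : (rk k : ℕ) + 2 ≤ (rk l : ℕ) ∨ (rk l : ℕ) + 2 ≤ (rk k : ℕ) := by
        have hklv : (k : ℕ) ≠ (l : ℕ) := fun h => hkl (Fin.ext h)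
        rcases Nat.lt_or_ge (k : ℕ) (l : ℕ) with h | h
        · exact Or.inl (hgap k l h)
        · exact Or.inr (hgap l k (by omega))
      constructor
      · intro hxy
        rw [hxy] at hxr
        omega
      · intro hadj'
        rcases ew_adj_close hadj' with ⟨h1, _⟩ | ⟨_, h2⟩
        · omega
        · omega
  · -- Case B : few mixed rows
    push_neg at hcase
    have hnpos : 0 < n := by omega
    have hNlow : n * (2 * n) - 3 ≤ Nat.card (Vw n) := wall_card_lower (by omega)
    have hcompl : X.ncard + Xᶜ.ncard = Nat.card (Vw n) :=
      Set.ncard_add_ncard_compl X (Set.toFinite _) (Set.toFinite _)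
    have hMcard : M.card ≤ 2 * t - 2 := by omega
    have hMbound : ∀ Y : Set (Vw n), Y ⊆ {v : Vw n | v.1.1 ∈ M} →
        Y.ncard ≤ (2 * t - 2) * (2 * n) := by
      intro Y hY
      calc Y.ncard ≤ {v : Vw n | v.1.1 ∈ M}.ncard :=
            Set.ncard_le_ncard hY (Set.toFinite _)
        _ ≤ M.card * (2 * n) := rows_bound M
        _ ≤ (2 * t - 2) * (2 * n) := Nat.mul_le_mul_right _ hMcard
    have hprod : (2 * t - 2) * (2 * n) ≤ (2 * t) * (2 * n) :=
      Nat.mul_le_mul_right _ (by omega)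
    have hpureX : ∃ r : Fin n, rowPure X r := by
      by_contra hno
      push_neg at hno
      have hsub : X ⊆ {v : Vw n | v.1.1 ∈ M} := by
        intro v hv
        simp only [Set.mem_setOf_eq, hM, Finset.mem_filter, Finset.mem_univ, true_and]
        by_contra hmm2
        rcases row_dichotomy X v.1.1 hmm2 with hp | hp
        · exact hno _ hp
        · exact hp v rfl hv
      have hXb := hMbound X hsub
      have := hbal1
      have h3 : 3 * X.ncard ≤ 3 * ((2 * t) * (2 * n)) := by
        have := le_trans hXb hprod
        omega
      omega
    have hpureC : ∃ r : Fin n, rowPure Xᶜ r := by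
      by_contra hno
      push_neg at hno
      have hsub : Xᶜ ⊆ {v : Vw n | v.1.1 ∈ M} := by
        intro v hv
        simp only [Set.mem_setOf_eq, hM, Finset.mem_filter, Finset.mem_univ, true_and]
        by_contra hmm2
        rcases row_dichotomy X v.1.1 hmm2 with hp | hp
        · exact hv (hp v rfl)
        · exact hno _ hp
      have hXb := hMbound Xᶜ hsub
      have h3 : 3 * Xᶜ.ncard ≤ 3 * ((2 * t) * (2 * n)) := by
        have := le_trans hXb hprod
        omega
      omega
    obtain ⟨rx, hrx⟩ := hpureX
    obtain ⟨rc, hrc⟩ := hpureC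
    have hrxc : (rx : ℕ) ≠ (rc : ℕ) := by
      intro hc
      have hv1 : (wv (rx : ℕ) 1 rx.isLt le_rfl (by omega) : Vw n) ∈ X :=
        hrx _ (Fin.ext (wv_row _ _ _))
      have hv2 : (wv (rx : ℕ) 1 rx.isLt le_rfl (by omega) : Vw n) ∈ Xᶜ :=
        hrc _ ((Fin.ext (wv_row _ _ _)).trans (Fin.ext hc))
      exact hv2 hv1
    -- get a pure interval
    have hinterval : ∃ lo hi : Fin n, (lo : ℕ) < (hi : ℕ) ∧
        ((rowPure X lo ∧ rowPure Xᶜ hi) ∨ (rowPure Xᶜ lo ∧ rowPure X hi)) ∧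
        ∀ r : Fin n, (lo : ℕ) < (r : ℕ) → (r : ℕ) < (hi : ℕ) → rowMixed X r := by
      rcases Nat.lt_or_ge (rx : ℕ) (rc : ℕ) with h | h
      · exact pure_interval X _ rx rc rfl h hrx hrc
      · have hlt : (rc : ℕ) < (rx : ℕ) := by omega
        have hrx' : rowPure Xᶜᶜ rx := by rwa [compl_compl]
        obtain ⟨lo, hi, h1, h2, h3⟩ := pure_interval Xᶜ _ rc rx rfl hlt hrc hrx'
        refine ⟨lo, hi, h1, ?_, ?_⟩
        · rw [compl_compl] at h2
          tauto
        · intro r hr1 hr2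
          have := h3 r hr1 hr2
          rw [rowMixed] at this ⊢
          refine ⟨this.2.imp ?_, this.1.imp ?_⟩
          · rintro v ⟨hv1, hv2⟩
            exact ⟨hv1, not_not.mp hv2⟩
          · rintro v ⟨hv1, hv2⟩
            exact ⟨hv1, hv2⟩
    obtain ⟨lo, hi, hlohi, horient, hmid⟩ := hinterval
    -- bound on the interval length
    have hdbound : (hi : ℕ) - (lo : ℕ) ≤ 2 * t - 1 := by
      have hcard : ((hi : ℕ) - (lo : ℕ)) - 1 ≤ M.card := by
        have hinj : (Finset.Ioo (lo : ℕ) (hi : ℕ)).card ≤ M.card := by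
          apply Finset.card_le_card_of_injOn
            (fun m => (⟨m % n, Nat.mod_lt _ hnpos⟩ : Fin n))
          · intro m hm
            rw [Finset.mem_coe, Finset.mem_Ioo] at hm
            have hmn : m % n = m := Nat.mod_eq_of_lt (lt_trans hm.2 hi.isLt)
            rw [hM]
            simp only [Finset.mem_coe, Finset.mem_filter, Finset.mem_univ, true_and]
            have := hmid ⟨m % n, Nat.mod_lt _ hnpos⟩ (by simp [hmn]; omega)
              (by simp [hmn]; omega)
            exact this
          · intro m hm m' hm' hmm
            rw [Finset.mem_coe, Finset.mem_Ioo] at hm hm'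
            have h1 : m % n = m := Nat.mod_eq_of_lt (lt_trans hm.2 hi.isLt)
            have h2 : m' % n = m' := Nat.mod_eq_of_lt (lt_trans hm'.2 hi.isLt)
            have := Fin.mk.injEq .. ▸ hmm
            have hval : m % n = m' % n := Fin.mk.inj_iff.mp hmm
            omega
        rw [Nat.card_Ioo] at hinj
        omega
      omega
    set d := (hi : ℕ) - (lo : ℕ) with hd
    -- the channels
    have hchan : ∀ k : Fin t, ∃ uu ww : Vw n, (elementaryWall n n).Adj uu ww ∧
        uu ∈ X ∧ ww ∉ X ∧
        (2 + (lo : ℕ) % 2 + 2 * ((t + 1) * (k : ℕ))) ≤ (uu.1.2 : ℕ) ∧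
        (uu.1.2 : ℕ) ≤ (2 + (lo : ℕ) % 2 + 2 * ((t + 1) * (k : ℕ))) + d ∧
        (2 + (lo : ℕ) % 2 + 2 * ((t + 1) * (k : ℕ))) ≤ (ww.1.2 : ℕ) ∧
        (ww.1.2 : ℕ) ≤ (2 + (lo : ℕ) % 2 + 2 * ((t + 1) * (k : ℕ))) + d := by
      intro k
      set c := 2 + (lo : ℕ) % 2 + 2 * ((t + 1) * (k : ℕ)) with hc
      have hkt : (k : ℕ) < t := k.isLt
      have hkbound : (t + 1) * (k : ℕ) ≤ (t + 1) * (t - 1) :=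
        Nat.mul_le_mul_left _ (by omega)
      have ht2 : 2 * ((t + 1) * (t - 1)) + 2 = 2 * t * t := by
        obtain ⟨t', rfl⟩ : ∃ t', t = t' + 1 := ⟨t - 1, by omega⟩
        simp only [Nat.add_sub_cancel]
        ring
      have hc2 : c + d ≤ 2 * n - 2 := by omega
      have hpar : c % 2 = (lo : ℕ) % 2 := by omega
      have hc1 : 1 ≤ c := by omega
      rcases horient with ⟨hloX, hhiC⟩ | ⟨hloC, hhiX⟩
      · obtain ⟨uu, ww, h1, h2, h3, h4, h5, h6, h7⟩ :=
          channel_cross X (lo : ℕ) (hi : ℕ) c hlohi hi.isLt hc1 hpar hc2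
            (fun v hv => hloX v (Fin.ext hv)) (fun v hv => hhiC v (Fin.ext hv))
        exact ⟨uu, ww, h1, h2, h3, h4, h5, h6, h7⟩
      · obtain ⟨uu, ww, h1, h2, h3, h4, h5, h6, h7⟩ :=
          channel_cross Xᶜ (lo : ℕ) (hi : ℕ) c hlohi hi.isLt hc1 hpar hc2
            (fun v hv => hloC v (Fin.ext hv))
            (fun v hv hc' => hc' (hhiX v (Fin.ext hv)))
        exact ⟨ww, uu, h1.symm, not_not.mp h3, h2, h6, h7, h4, h5⟩
    choose u w hadj hu hw hcu1 hcu2 hcw1 hcw2 using hchan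
    apply cutmim_ge X t (fun k => (u k, w k))
    · intro k
      exact ⟨hu k, hw k, hadj k⟩
    · intro k l hkl x y hx hy
      have hklv : (k : ℕ) ≠ (l : ℕ) := fun h => hkl (Fin.ext h)
      have hxc : (2 + (lo : ℕ) % 2 + 2 * ((t + 1) * (k : ℕ))) ≤ (x.1.2 : ℕ) ∧
          (x.1.2 : ℕ) ≤ (2 + (lo : ℕ) % 2 + 2 * ((t + 1) * (k : ℕ))) + d := by
        rcases hx with rfl | rfl
        · exact ⟨hcu1 k, hcu2 k⟩
        · exact ⟨hcw1 k, hcw2 k⟩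
      have hyc : (2 + (lo : ℕ) % 2 + 2 * ((t + 1) * (l : ℕ))) ≤ (y.1.2 : ℕ) ∧
          (y.1.2 : ℕ) ≤ (2 + (lo : ℕ) % 2 + 2 * ((t + 1) * (l : ℕ))) + d := by
        rcases hy with rfl | rfl
        · exact ⟨hcu1 l, hcu2 l⟩
        · exact ⟨hcw1 l, hcw2 l⟩
      have hfar : (x.1.2 : ℕ) + 2 ≤ (y.1.2 : ℕ) ∨ (y.1.2 : ℕ) + 2 ≤ (x.1.2 : ℕ) := by
        rcases Nat.lt_or_ge (k : ℕ) (l : ℕ) with h | h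
        · left
          have hmul : (t + 1) * ((k : ℕ) + 1) ≤ (t + 1) * (l : ℕ) :=
            Nat.mul_le_mul_left _ (by omega)
          have hexp : (t + 1) * ((k : ℕ) + 1) = (t + 1) * (k : ℕ) + t + 1 := by
            ring
          omega
        · right
          have hlk : (l : ℕ) < (k : ℕ) := by omega
          have hmul : (t + 1) * ((l : ℕ) + 1) ≤ (t + 1) * (k : ℕ) :=
            Nat.mul_le_mul_left _ (by omega)
          have hexp : (t + 1) * ((l : ℕ) + 1) = (t + 1) * (l : ℕ) + t + 1 := by
            ring
          omega
      constructor
      · intro hxy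
        rw [hxy] at hfar
        omega
      · intro hadj'
        rcases ew_adj_close hadj' with ⟨_, h2⟩ | ⟨h1, _⟩
        · omega
        · omega

end WallCut

/-- The elementary `(n × n)`-wall with `n ≥ 7` has mim-width at least
`√n / 50`. -/
theorem wall_mimw (n : ℕ) (hn : 7 ≤ n) :
    Real.sqrt n / 50 ≤ (mimw (elementaryWall n n) : ℝ) := by
  classical
  set t : ℕ := ⌈Real.sqrt (n : ℝ) / 50⌉₊ with htdef
  set s : ℝ := Real.sqrt (n : ℝ) with hsdef
  have hsnn : (0 : ℝ) ≤ s := Real.sqrt_nonneg _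
  have hn7 : (7 : ℝ) ≤ (n : ℝ) := by exact_mod_cast hn
  have hsq : s * s = (n : ℝ) := Real.mul_self_sqrt (by positivity)
  have hs7 : (7 : ℝ) ≤ s * s := by rw [hsq]; exact hn7
  have hs52 : (5 / 2 : ℝ) ≤ s := by nlinarith [hs7, hsnn]
  have ht_le : s / 50 ≤ (t : ℝ) := Nat.le_ceil _
  have ht_ub : (t : ℝ) ≤ s / 50 + 1 := by
    have := Nat.ceil_lt_add_one (show (0 : ℝ) ≤ s / 50 by positivity)
    rw [htdef]
    exact le_of_lt this
  have ht1 : 1 ≤ t := by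
    rw [htdef]
    rw [Nat.one_le_iff_ne_zero]
    intro hc
    have := Nat.ceil_eq_zero.mp hc
    nlinarith [hs52]
  have htnn : (0 : ℝ) ≤ (t : ℝ) := Nat.cast_nonneg t
  have harith : 2 * t * t + 2 * t + 4 ≤ 2 * n := by
    have htub2 : (t : ℝ) * (t : ℝ) ≤ (s / 50 + 1) * (s / 50 + 1) :=
      mul_le_mul ht_ub ht_ub htnn (by positivity)
    have h1 : (2 * t * t + 2 * t + 4 : ℝ) ≤ 2 * (n : ℝ) := by
      rw [← hsq]
      nlinarith [htub2, ht_ub, hs7, hsnn, sq_nonneg (s - 1)]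
    exact_mod_cast h1
  have harith2 : 3 * ((2 * t) * (2 * n)) + 6 ≤ n * (2 * n) := by
    have h1 : (3 * ((2 * t) * (2 * n)) + 6 : ℝ) ≤ (n : ℝ) * (2 * n) := by
      rw [← hsq]
      nlinarith [ht_ub, hs7, hsnn, hs52, sq_nonneg (s - 1), sq_nonneg s,
        mul_nonneg hsnn hsnn, mul_nonneg (mul_nonneg hsnn hsnn) hsnn]
    exact_mod_cast h1
  have hcard2 : 2 ≤ Nat.card (Vw n) := by
    have hlow := wall_card_lower (n := n) (by omega)
    have hq : 7 * (2 * n) ≤ n * (2 * n) := Nat.mul_le_mul_right _ hn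
    omega
  obtain ⟨B0⟩ := exists_branchDecomp (elementaryWall n n) hcard2
  have hSne : {m : ℕ | ∃ B : BranchDecomp (elementaryWall n n), B.width = m}.Nonempty :=
    ⟨B0.width, B0, rfl⟩
  have hall : ∀ m ∈ {m : ℕ | ∃ B : BranchDecomp (elementaryWall n n), B.width = m},
      t ≤ m := by
    rintro m ⟨B, rfl⟩
    obtain ⟨a, b, hab, h1, h2⟩ := exists_balanced_edge B hcard2
    have hcut : t ≤ cutmim (elementaryWall n n) (B.side a b) (B.side a b)ᶜ :=
      wall_cut hn t ht1 harith harith2 (B.side a b) h1 h2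
    refine le_trans hcut ?_
    haveI : Fintype (Vw n) := Fintype.ofFinite _
    have hbdd : BddAbove {m : ℕ | ∃ a b : B.L, B.T.Adj a b ∧
        m = cutmim (elementaryWall n n) (B.side a b) (B.side a b)ᶜ} := by
      refine ⟨Fintype.card (Vw n × Vw n), ?_⟩
      rintro m ⟨a', b', _, rfl⟩
      exact cutmim_le_bound _ _
    exact le_csSup hbdd ⟨a, b, hab, rfl⟩
  have hmimw : t ≤ mimw (elementaryWall n n) := le_csInf hSne hall
  calc Real.sqrt (n : ℝ) / 50 ≤ (t : ℝ) := ht_le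
    _ ≤ (mimw (elementaryWall n n) : ℝ) := by exact_mod_cast hmimw
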